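/- Fano's inequality: for discrete random variables Y taking values in a finite set 𝒴 with |𝒴| ≥ 2, an observation Z, and an estimator Ŷ = g(Z) that is a (measurable) function of Z, letting E = 1{Ŷ ≠ Y} denote the error indicator, we have P(E = 1) ≥ (H(Y | Z) − H(E)) / log(|𝒴| − 1). -/

import Mathlib

open scoped Classical
open Finset

/-- Probability of an event under weight function `p` on a finite sample space. -/
noncomputable def prob {Ω : Type*} [Fintype Ω] (p : Ω → ℝ) (s : Ω → Prop) : ℝ :=
  ∑ ω ∈ Finset.univ.filter (fun ω => s ω), p ω

/-- Shannon entropy of a discrete random variable `X`. -/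
noncomputable def entropy {Ω α : Type*} [Fintype Ω] [Fintype α] (p : Ω → ℝ) (X : Ω → α) : ℝ :=
  -∑ a : α, prob p (fun ω => X ω = a) * Real.log (prob p (fun ω => X ω = a))

/-- Shannon conditional entropy `H(Y | X)`. -/
noncomputable def condEntropy {Ω α β : Type*} [Fintype Ω] [Fintype α] [Fintype β]
    (p : Ω → ℝ) (Y : Ω → β) (X : Ω → α) : ℝ :=
  -∑ a : α, ∑ b : β, prob p (fun ω => X ω = a ∧ Y ω = b) *
    Real.log (prob p (fun ω => X ω = a ∧ Y ω = b) / prob p (fun ω => X ω = a))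

/-- `p` is a probability mass function on the finite sample space `Ω`. -/
def IsPMF {Ω : Type*} [Fintype Ω] (p : Ω → ℝ) : Prop :=
  (∀ ω, 0 ≤ p ω) ∧ ∑ ω : Ω, p ω = 1

section aux
variable {Ω : Type*} [Fintype Ω] {p : Ω → ℝ}

lemma prob_eq_sum_ite (p : Ω → ℝ) (s : Ω → Prop) :
    prob p s = ∑ ω : Ω, if s ω then p ω else 0 := by
  rw [prob, Finset.sum_filter]

lemma prob_congr (p : Ω → ℝ) {s t : Ω → Prop} (h : ∀ ω, s ω ↔ t ω) :
    prob p s = prob p t := by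
  simp only [prob_eq_sum_ite]
  exact Finset.sum_congr rfl fun ω _ => by simp [h ω]

lemma prob_nonneg (hp : ∀ ω, 0 ≤ p ω) (s : Ω → Prop) : 0 ≤ prob p s :=
  Finset.sum_nonneg fun ω _ => hp ω

lemma prob_mono (hp : ∀ ω, 0 ≤ p ω) {s t : Ω → Prop} (h : ∀ ω, s ω → t ω) :
    prob p s ≤ prob p t := by
  apply Finset.sum_le_sum_of_subset_of_nonneg
  · exact Finset.monotone_filter_right _ (fun ω _ hs => h ω hs)
  · exact fun i _ _ => hp i

lemma prob_le_one (hp : IsPMF p) (s : Ω → Prop) : prob p s ≤ 1 := by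
  rw [← hp.2]
  exact Finset.sum_le_sum_of_subset_of_nonneg (Finset.filter_subset _ _) fun i _ _ => hp.1 i

lemma prob_not (hp : IsPMF p) (s : Ω → Prop) :
    prob p (fun ω => ¬ s ω) = 1 - prob p s := by
  have h : prob p (fun ω => ¬ s ω) + prob p s = 1 := by
    simp only [prob_eq_sum_ite, ← Finset.sum_add_distrib]
    rw [← hp.2]
    refine Finset.sum_congr rfl fun ω _ => ?_
    by_cases hs : s ω <;> simp [hs]
  linarith

lemma sum_prob_and {α : Type*} [Fintype α] (X : Ω → α) (s : Ω → Prop) :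
    ∑ a : α, prob p (fun ω => X ω = a ∧ s ω) = prob p s := by
  simp only [prob_eq_sum_ite]
  rw [Finset.sum_comm]
  refine Finset.sum_congr rfl fun ω _ => ?_
  by_cases h : s ω <;> simp [h]

lemma sum_prob_eq_one (hp : IsPMF p) {α : Type*} [Fintype α] (X : Ω → α) :
    ∑ a : α, prob p (fun ω => X ω = a) = 1 := by
  have := sum_prob_and (p := p) X (fun _ => True)
  simp only [and_true] at this
  rw [this, ← hp.2, prob_eq_sum_ite]
  simp

lemma sum_prob_diag {α β : Type*} [Fintype α] (X : Ω → α) (Y : Ω → β) (g : α → β) :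
    ∑ a : α, prob p (fun ω => X ω = a ∧ Y ω = g a) = prob p (fun ω => g (X ω) = Y ω) := by
  simp only [prob_eq_sum_ite]
  rw [Finset.sum_comm]
  refine Finset.sum_congr rfl fun ω _ => ?_
  rw [Finset.sum_eq_single (X ω)]
  · by_cases h : g (X ω) = Y ω
    · simp [h.symm]
    · simp [h, Ne.symm h]
  · intro a _ ha
    rw [if_neg]
    rintro ⟨h1, -⟩
    exact ha h1.symm
  · intro h
    exact absurd (Finset.mem_univ _) h

end aux

lemma key_ineq (a pz q : ℝ) (ha : 0 ≤ a) (hap : a ≤ pz) (hq : 0 ≤ q)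
    (hpos : 0 < a → 0 < q) :
    a * Real.log q - a * Real.log (a / pz) ≤ q * pz - a := by
  rcases eq_or_lt_of_le ha with h0 | h0
  · rw [← h0] at hap ⊢
    simp only [zero_mul, sub_zero, sub_self]
    exact mul_nonneg hq hap
  · have hpz : 0 < pz := lt_of_lt_of_le h0 hap
    have hq' := hpos h0
    have h1 : Real.log (q * pz / a) ≤ q * pz / a - 1 :=
      Real.log_le_sub_one_of_pos (by positivity)
    have h2 : Real.log (q * pz / a) = Real.log q - Real.log (a / pz) := by
      rw [Real.log_div (by positivity) h0.ne', Real.log_mul hq'.ne' hpz.ne',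
        Real.log_div h0.ne' hpz.ne']
      ring
    rw [h2] at h1
    have h3 := mul_le_mul_of_nonneg_left h1 ha
    have h4 : a * (q * pz / a) = q * pz := by field_simp
    nlinarith

lemma mul_log_div_eq (x c : ℝ) (hx : 0 ≤ x) (hc : 0 < c) :
    x * Real.log (x / c) = x * Real.log x - x * Real.log c := by
  rcases eq_or_lt_of_le hx with h | h
  · simp [← h]
  · rw [Real.log_div h.ne' hc.ne']
    ring

/-- Fano's inequality: with estimator g (Z w) of Y w and error indicator E,
P(E = 1) >= (H(Y|Z) - H(E)) / log(card - 1). -/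
theorem fano_inequality {Ω γ 𝒴 : Type*} [Fintype Ω] [Fintype γ] [Fintype 𝒴]
    (p : Ω → ℝ) (hp : IsPMF p) (Y : Ω → 𝒴) (Z : Ω → γ) (g : γ → 𝒴)
    (hcard : 3 ≤ Fintype.card 𝒴) :
    prob p (fun ω => g (Z ω) ≠ Y ω)
      ≥ (condEntropy p Y Z - entropy p (fun ω => decide (g (Z ω) ≠ Y ω)))
          / Real.log ((Fintype.card 𝒴 : ℝ) - 1) := by
  obtain ⟨hp0, hp1⟩ := hp
  have hpmf : IsPMF p := ⟨hp0, hp1⟩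
  set M : ℝ := (Fintype.card 𝒴 : ℝ) with hM
  have hM3 : (3:ℝ) ≤ M := by rw [hM]; exact_mod_cast hcard
  have hMpos : (0:ℝ) < M - 1 := by linarith
  have hL : 0 < Real.log (M - 1) := Real.log_pos (by linarith)
  set π := prob p (fun ω => g (Z ω) ≠ Y ω) with hπdef
  have hπ0 : 0 ≤ π := prob_nonneg hp0 _
  have hπ1 : π ≤ 1 := prob_le_one hpmf _
  have hcorrProb : prob p (fun ω => g (Z ω) = Y ω) = 1 - π := by
    have h := prob_not hpmf (fun ω => g (Z ω) = Y ω)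
    rw [hπdef]
    rw [show (fun ω => g (Z ω) ≠ Y ω) = (fun ω => ¬ g (Z ω) = Y ω) from rfl, h]
    ring
  -- abbreviations
  have hPznn : ∀ z, (0:ℝ) ≤ prob p (fun ω => Z ω = z) := fun z => prob_nonneg hp0 _
  have hPnn : ∀ z y, (0:ℝ) ≤ prob p (fun ω => Z ω = z ∧ Y ω = y) := fun z y => prob_nonneg hp0 _
  have hPle : ∀ z y, prob p (fun ω => Z ω = z ∧ Y ω = y) ≤ prob p (fun ω => Z ω = z) :=
    fun z y => prob_mono hp0 fun ω h => h.1
  have hrow : ∀ z, ∑ y : 𝒴, prob p (fun ω => Z ω = z ∧ Y ω = y) = prob p (fun ω => Z ω = z) := by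
    intro z
    have := sum_prob_and (p := p) Y (fun ω => Z ω = z)
    rw [← this]
    exact Finset.sum_congr rfl fun y _ => prob_congr p fun ω => and_comm
  have hzsum : ∑ z : γ, prob p (fun ω => Z ω = z) = 1 := sum_prob_eq_one hpmf Z
  have hcorrect : ∑ z : γ, prob p (fun ω => Z ω = z ∧ Y ω = g z) = 1 - π := by
    rw [sum_prob_diag Z Y g, hcorrProb]
  have herr : ∑ z : γ, ∑ y ∈ Finset.univ.erase (g z),
      prob p (fun ω => Z ω = z ∧ Y ω = y) = π := by
    have h1 : ∀ z : γ, ∑ y ∈ Finset.univ.erase (g z), prob p (fun ω => Z ω = z ∧ Y ω = y)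
        = prob p (fun ω => Z ω = z) - prob p (fun ω => Z ω = z ∧ Y ω = g z) := by
      intro z
      have := hrow z
      rw [← Finset.add_sum_erase _ _ (Finset.mem_univ (g z))] at this
      linarith
    rw [Finset.sum_congr rfl fun z _ => h1 z, Finset.sum_sub_distrib, hzsum, hcorrect]
    ring
  -- entropy of error indicator
  have hEtrue : prob p (fun ω => decide (g (Z ω) ≠ Y ω) = true) = π := by
    rw [hπdef]
    exact prob_congr p fun ω => by simp
  have hEfalse : prob p (fun ω => decide (g (Z ω) ≠ Y ω) = false) = 1 - π := by
    rw [← hcorrProb]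
    exact prob_congr p fun ω => by simp
  have hE : entropy p (fun ω => decide (g (Z ω) ≠ Y ω))
      = -(π * Real.log π + (1 - π) * Real.log (1 - π)) := by
    rw [entropy, Fintype.sum_bool, hEtrue, hEfalse]
  -- q z y := if y = g z then 1 - π else π / (M - 1)
  have hqpos : ∀ z y, 0 < prob p (fun ω => Z ω = z ∧ Y ω = y) →
      0 < (if y = g z then 1 - π else π / (M - 1)) := by
    intro z y hpos
    split
    · next h =>
      have : prob p (fun ω => Z ω = z ∧ Y ω = y) ≤ prob p (fun ω => g (Z ω) = Y ω) := by
        apply prob_mono hp0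
        rintro ω ⟨h1, h2⟩
        rw [h1, h2, h]
      rw [hcorrProb] at this
      linarith
    · next h =>
      have : prob p (fun ω => Z ω = z ∧ Y ω = y) ≤ π := by
        rw [hπdef]
        apply prob_mono hp0
        rintro ω ⟨h1, h2⟩
        rw [h1, h2]
        exact fun hc => h hc.symm
      have : 0 < π := lt_of_lt_of_le hpos this
      positivity
  have hqnn : ∀ z y, (0:ℝ) ≤ (if y = g z then 1 - π else π / (M - 1)) := by
    intro z y
    split
    · linarith
    · positivity
  have hqsum : ∀ z : γ, ∑ y : 𝒴, (if y = g z then 1 - π else π / (M - 1)) = 1 := by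
    intro z
    rw [← Finset.add_sum_erase _ _ (Finset.mem_univ (g z)), if_pos rfl]
    have h1 : ∀ y ∈ Finset.univ.erase (g z),
        (if y = g z then 1 - π else π / (M - 1)) = π / (M - 1) := by
      intro y hy
      rw [if_neg (Finset.mem_erase.mp hy).1]
    rw [Finset.sum_congr rfl h1, Finset.sum_const,
      Finset.card_erase_of_mem (Finset.mem_univ _), Finset.card_univ, nsmul_eq_mul]
    have hcast : ((Fintype.card 𝒴 - 1 : ℕ) : ℝ) = M - 1 := by
      have h1 : 1 ≤ Fintype.card 𝒴 := by omega
      rw [hM]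
      push_cast [h1]
      ring
    rw [hcast, mul_div_cancel₀ _ hMpos.ne']
    ring
  -- Gibbs inequality
  have gibbs : condEntropy p Y Z ≤
      -∑ z : γ, ∑ y : 𝒴, prob p (fun ω => Z ω = z ∧ Y ω = y) *
        Real.log (if y = g z then 1 - π else π / (M - 1)) := by
    rw [condEntropy, neg_le_neg_iff]
    have step : ∑ z : γ, ∑ y : 𝒴,
        (prob p (fun ω => Z ω = z ∧ Y ω = y) * Real.log (if y = g z then 1 - π else π / (M - 1))
          - prob p (fun ω => Z ω = z ∧ Y ω = y) *
            Real.log (prob p (fun ω => Z ω = z ∧ Y ω = y) / prob p (fun ω => Z ω = z))) ≤ 0 := by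
      calc _ ≤ ∑ z : γ, ∑ y : 𝒴,
          ((if y = g z then 1 - π else π / (M - 1)) * prob p (fun ω => Z ω = z)
            - prob p (fun ω => Z ω = z ∧ Y ω = y)) := by
            refine Finset.sum_le_sum fun z _ => Finset.sum_le_sum fun y _ => ?_
            exact key_ineq _ _ _ (hPnn z y) (hPle z y) (hqnn z y) (hqpos z y)
        _ = 0 := by
            refine Finset.sum_eq_zero fun z _ => ?_
            rw [Finset.sum_sub_distrib, ← Finset.sum_mul, hqsum z, hrow z]
            ring
    simp only [Finset.sum_sub_distrib] at step
    linarith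
  -- evaluate the cross entropy
  have hB : ∑ z : γ, ∑ y : 𝒴, prob p (fun ω => Z ω = z ∧ Y ω = y) *
      Real.log (if y = g z then 1 - π else π / (M - 1))
      = (1 - π) * Real.log (1 - π) + π * Real.log (π / (M - 1)) := by
    have per : ∀ z : γ, ∑ y : 𝒴, prob p (fun ω => Z ω = z ∧ Y ω = y) *
        Real.log (if y = g z then 1 - π else π / (M - 1))
        = prob p (fun ω => Z ω = z ∧ Y ω = g z) * Real.log (1 - π)
          + (∑ y ∈ Finset.univ.erase (g z), prob p (fun ω => Z ω = z ∧ Y ω = y))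
            * Real.log (π / (M - 1)) := by
      intro z
      rw [← Finset.add_sum_erase _ _ (Finset.mem_univ (g z)), if_pos rfl, Finset.sum_mul]
      congr 1
      refine Finset.sum_congr rfl fun y hy => ?_
      rw [if_neg (Finset.mem_erase.mp hy).1]
    rw [Finset.sum_congr rfl fun z _ => per z, Finset.sum_add_distrib,
      ← Finset.sum_mul, ← Finset.sum_mul, hcorrect, herr]
  have hsplit : π * Real.log (π / (M - 1)) = π * Real.log π - π * Real.log (M - 1) :=
    mul_log_div_eq π (M - 1) hπ0 hMpos
  -- conclude
  rw [ge_iff_le, div_le_iff₀ hL]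
  have hfinal : condEntropy p Y Z
      ≤ entropy p (fun ω => decide (g (Z ω) ≠ Y ω)) + π * Real.log (M - 1) := by
    have hg := gibbs
    rw [hB] at hg
    rw [hE]
    linarith [hsplit]
  linarith
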